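/- Let γ_{jR}, γ_{jL}, γ_{lR}, γ_{lL} ≥ 0, let τ_j, τ_l > 0, let t ∈ ℝ and 0 < Δt < τ_j + τ_l. Let 1_I be the indicator function of I = [t, t+Δt], and set T_j = T[γ_{jR},γ_{jL},τ_j], T_l = T[γ_{lR},γ_{lL},τ_l]. Then ⟨T_j 1_I, T_l 1_I⟩ = (√(γ_{jL}γ_{lL}) + √(γ_{jR}γ_{lR}))·max(Δt − |τ_j − τ_l|, 0). In particular it equals 0 when |τ_j − τ_l| > Δt, and equals (√(γ_{jL}γ_{lL}) + √(γ_{jR}γ_{lR}))·Δt when τ_j = τ_l. (This is the rigorous form of the off-diagonal cases of the paper's Theorem 1, the non-Markovian Itô rule dB_in^{(j)}(t)·dB_in^{(l)†}(t) for distinct channels of a semi-infinite waveguide.) -/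

import Mathlib

open MeasureTheory ComplexConjugate

/-- The L² pairing ⟨f,g⟩ = ∫ conj(f t) · g t dt. -/
noncomputable def pairL2 (f g : ℝ → ℂ) : ℂ := ∫ t : ℝ, conj (f t) * g t

/-- The smeared semi-infinite-waveguide noise channel:
`(T[γR,γL,τ] f)(t) = √γR·f(t+τ) − √γL·f(t−τ)`. -/
noncomputable def Tchan (γR γL τ : ℝ) (f : ℝ → ℂ) : ℝ → ℂ :=
  fun t => (Real.sqrt γR : ℂ) * f (t + τ) - (Real.sqrt γL : ℂ) * f (t - τ)

lemma ind_shift (t u a s : ℝ) :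
    Set.indicator (Set.Icc t u) (fun _ => (1:ℂ)) (s + a)
      = Set.indicator (Set.Icc (t - a) (u - a)) (fun _ => (1:ℂ)) s := by
  simp only [Set.indicator_apply, Set.mem_Icc]
  congr 1
  simp only [eq_iff_iff]
  constructor <;> intro h <;> exact ⟨by linarith [h.1], by linarith [h.2]⟩

lemma prod_eq (t u a b s : ℝ) :
    Set.indicator (Set.Icc t u) (fun _ => (1:ℂ)) (s + a)
      * Set.indicator (Set.Icc t u) (fun _ => (1:ℂ)) (s + b)
    = Set.indicator (Set.Icc (max (t - a) (t - b)) (min (u - a) (u - b)))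
        (fun _ => (1:ℂ)) s := by
  rw [ind_shift, ind_shift, ← Set.inter_indicator_mul, Set.Icc_inter_Icc]
  simp

lemma intg (t u a b : ℝ) :
    Integrable (fun s : ℝ => Set.indicator (Set.Icc t u) (fun _ => (1:ℂ)) (s + a)
      * Set.indicator (Set.Icc t u) (fun _ => (1:ℂ)) (s + b)) := by
  simp only [prod_eq]
  rw [integrable_indicator_iff measurableSet_Icc]
  exact integrableOn_const measure_Icc_lt_top.ne (by simp)

lemma core (t Δt a b : ℝ) :
    (∫ s : ℝ, Set.indicator (Set.Icc t (t + Δt)) (fun _ => (1:ℂ)) (s + a)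
      * Set.indicator (Set.Icc t (t + Δt)) (fun _ => (1:ℂ)) (s + b))
    = ((max (Δt - |a - b|) 0 : ℝ) : ℂ) := by
  simp only [prod_eq]
  rw [integral_indicator_const _ measurableSet_Icc, measureReal_def, Real.volume_Icc]
  have h1 : min (t + Δt - a) (t + Δt - b) - max (t - a) (t - b)
      = Δt - |a - b| := by
    rcases le_total a b with h | h
    · rw [abs_of_nonpos (by linarith), min_eq_right (by linarith),
        max_eq_left (by linarith)]
      ring
    · rw [abs_of_nonneg (by linarith), min_eq_left (by linarith),
        max_eq_right (by linarith)]
      ring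
  rw [h1, ENNReal.toReal_ofReal']
  simp [Complex.real_smul]

theorem stmt_8 (γjR γjL γlR γlL : ℝ)
    (hjR : 0 ≤ γjR) (hjL : 0 ≤ γjL) (hlR : 0 ≤ γlR) (hlL : 0 ≤ γlL)
    (τj τl : ℝ) (hτj : 0 < τj) (hτl : 0 < τl)
    (t Δt : ℝ) (hΔt : 0 < Δt) (hΔτ : Δt < τj + τl) :
    pairL2 (Tchan γjR γjL τj (Set.indicator (Set.Icc t (t + Δt)) fun _ => (1 : ℂ)))
           (Tchan γlR γlL τl (Set.indicator (Set.Icc t (t + Δt)) fun _ => (1 : ℂ))) =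
      (((Real.sqrt (γjL * γlL) + Real.sqrt (γjR * γlR)) * max (Δt - |τj - τl|) 0 : ℝ) : ℂ) ∧
    (|τj - τl| > Δt →
      pairL2 (Tchan γjR γjL τj (Set.indicator (Set.Icc t (t + Δt)) fun _ => (1 : ℂ)))
             (Tchan γlR γlL τl (Set.indicator (Set.Icc t (t + Δt)) fun _ => (1 : ℂ))) = 0) ∧
    (τj = τl →
      pairL2 (Tchan γjR γjL τj (Set.indicator (Set.Icc t (t + Δt)) fun _ => (1 : ℂ)))
             (Tchan γlR γlL τl (Set.indicator (Set.Icc t (t + Δt)) fun _ => (1 : ℂ))) =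
        (((Real.sqrt (γjL * γlL) + Real.sqrt (γjR * γlR)) * Δt : ℝ) : ℂ)) := by
  set f : ℝ → ℂ := Set.indicator (Set.Icc t (t + Δt)) fun _ => (1 : ℂ) with hf
  have hconjf : ∀ x : ℝ, conj (f x) = f x := by
    intro x
    simp [hf, Set.indicator_apply, apply_ite (starRingEnd ℂ)]
  have hint : ∀ s : ℝ, conj (Tchan γjR γjL τj f s) * Tchan γlR γlL τl f s =
      ((Real.sqrt γjR : ℂ) * (Real.sqrt γlR : ℂ)) * (f (s + τj) * f (s + τl))
      - ((Real.sqrt γjR : ℂ) * (Real.sqrt γlL : ℂ)) * (f (s + τj) * f (s + (-τl)))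
      - ((Real.sqrt γjL : ℂ) * (Real.sqrt γlR : ℂ)) * (f (s + (-τj)) * f (s + τl))
      + ((Real.sqrt γjL : ℂ) * (Real.sqrt γlL : ℂ)) * (f (s + (-τj)) * f (s + (-τl))) := by
    intro s
    simp only [Tchan, map_sub, map_mul, Complex.conj_ofReal, hconjf]
    simp only [sub_eq_add_neg]
    ring
  have key : pairL2 (Tchan γjR γjL τj f) (Tchan γlR γlL τl f) =
      (((Real.sqrt (γjL * γlL) + Real.sqrt (γjR * γlR)) * max (Δt - |τj - τl|) 0 : ℝ) : ℂ) := by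
    have i1 : Integrable (fun s : ℝ => ((Real.sqrt γjR : ℂ) * (Real.sqrt γlR : ℂ))
        * (f (s + τj) * f (s + τl))) :=
      (intg t (t + Δt) τj τl).const_mul _
    have i2 : Integrable (fun s : ℝ => ((Real.sqrt γjR : ℂ) * (Real.sqrt γlL : ℂ))
        * (f (s + τj) * f (s + (-τl)))) :=
      (intg t (t + Δt) τj (-τl)).const_mul _
    have i3 : Integrable (fun s : ℝ => ((Real.sqrt γjL : ℂ) * (Real.sqrt γlR : ℂ))
        * (f (s + (-τj)) * f (s + τl))) :=
      (intg t (t + Δt) (-τj) τl).const_mul _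
    have i4 : Integrable (fun s : ℝ => ((Real.sqrt γjL : ℂ) * (Real.sqrt γlL : ℂ))
        * (f (s + (-τj)) * f (s + (-τl)))) :=
      (intg t (t + Δt) (-τj) (-τl)).const_mul _
    have i12 : Integrable (fun s : ℝ => ((Real.sqrt γjR : ℂ) * (Real.sqrt γlR : ℂ))
        * (f (s + τj) * f (s + τl)) - ((Real.sqrt γjR : ℂ) * (Real.sqrt γlL : ℂ))
        * (f (s + τj) * f (s + (-τl)))) := i1.sub i2
    have i123 : Integrable (fun s : ℝ => (((Real.sqrt γjR : ℂ) * (Real.sqrt γlR : ℂ))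
        * (f (s + τj) * f (s + τl)) - ((Real.sqrt γjR : ℂ) * (Real.sqrt γlL : ℂ))
        * (f (s + τj) * f (s + (-τl)))) - ((Real.sqrt γjL : ℂ) * (Real.sqrt γlR : ℂ))
        * (f (s + (-τj)) * f (s + τl))) := i12.sub i3
    rw [pairL2]
    simp only [hint]
    rw [integral_add i123 i4, integral_sub i12 i3, integral_sub i1 i2,
      integral_const_mul, integral_const_mul, integral_const_mul, integral_const_mul]
    simp only [hf]
    rw [core, core, core, core]
    have e2 : |τj - -τl| = τj + τl := by rw [abs_of_pos (by linarith)]; ring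
    have e3 : |-τj - τl| = τj + τl := by rw [abs_of_neg (by linarith)]; ring
    have e4 : |-τj - -τl| = |τj - τl| := by rw [← abs_neg]; ring_nf
    rw [e2, e3, e4]
    have hz : max (Δt - (τj + τl)) 0 = 0 := max_eq_right (by linarith)
    rw [hz]
    have s1 : Real.sqrt γjR * Real.sqrt γlR = Real.sqrt (γjR * γlR) :=
      (Real.sqrt_mul hjR γlR).symm
    have s2 : Real.sqrt γjL * Real.sqrt γlL = Real.sqrt (γjL * γlL) :=
      (Real.sqrt_mul hjL γlL).symm
    push_cast
    rw [← s1, ← s2]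
    push_cast
    ring
  refine ⟨key, fun h => ?_, fun h => ?_⟩
  · rw [key, max_eq_right (by linarith)]
    simp
  · rw [key, h]
    simp [max_eq_left hΔt.le]
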